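/- Let G = (V,E) be a finite bi-directed graph, A ⊆ V, and let C, C̄ be nonempty connected sets in G. Consider log p_A^V(q) as a function of the variables (q_C : ∅ ≠ C ⊆ V connected) on the open set where p_A^V(q) > 0. Then the mixed second partial derivative ∂²(log p_A^V)/∂q_C ∂q_{C̄} equals: (i) 0, if (spo(C) ∩ (A∖C)) ∪ (spo(C̄) ∩ (A∖C̄)) ≠ ∅; (ii) −(−1)^{|C∖A|}(−1)^{|C̄∖A|} · p_{A∖C}^{V∖spo(C)}(q) · p_{A∖C̄}^{V∖spo(C̄)}(q) / (p_A^V(q))², if (spo(C) ∩ (A∖C)) ∪ (spo(C̄) ∩ (A∖C̄)) = ∅ and C̄ ∩ spo(C) ≠ ∅; (iii) (−1)^{|(C∪C̄)∖A|} · p_{A∖(C∪C̄)}^{V∖spo(C∪C̄)}(q) / p_A^V(q) − (−1)^{|C∖A|}(−1)^{|C̄∖A|} · p_{A∖C}^{V∖spo(C)}(q) · p_{A∖C̄}^{V∖spo(C̄)}(q) / (p_A^V(q))², if (spo(C) ∩ (A∖C)) ∪ (spo(C̄) ∩ (A∖C̄)) = ∅ and C̄ ∩ spo(C) = ∅. 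-/

import Mathlib

open Finset

namespace BMMI

variable {V : Type*} [Fintype V] [DecidableEq V]

/-- `Pr p A a` is the probability of the event `X_A = a|_A` under `p`. -/
def Pr (p : (V → Bool) → ℝ) (A : Finset V) (a : V → Bool) : ℝ :=
  ∑ i ∈ Finset.univ.filter (fun i : V → Bool => ∀ v ∈ A, i v = a v), p i

/-- `p` is a binary distribution on `V`. -/
def IsDist (p : (V → Bool) → ℝ) : Prop :=
  (∀ i, 0 ≤ p i) ∧ ∑ i : V → Bool, p i = 1

/-- `Pr2 p S T a b` is the probability of the joint event `X_S = a|_S, X_T = b|_T`. -/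
def Pr2 (p : (V → Bool) → ℝ) (S T : Finset V) (a b : V → Bool) : ℝ :=
  ∑ i ∈ Finset.univ.filter
      (fun i : V → Bool => (∀ v ∈ S, i v = a v) ∧ (∀ v ∈ T, i v = b v)), p i

/-- `X_S` and `X_T` are independent under `p`. -/
def Indep (p : (V → Bool) → ℝ) (S T : Finset V) : Prop :=
  ∀ a b : V → Bool, Pr2 p S T a b = Pr p S a * Pr p T b

/-- `spo G A` consists of `A` together with all vertices adjacent to a vertex of `A`. -/
def spo (G : SimpleGraph V) [DecidableRel G.Adj] (A : Finset V) : Finset V :=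
  Finset.univ.filter (fun w => w ∈ A ∨ ∃ v ∈ A, G.Adj v w)

/-- `C` is connected in `G`: every pair of vertices of `C` is joined by a walk
all of whose vertices lie in `C`. -/
def Conn (G : SimpleGraph V) (C : Finset V) : Prop :=
  ∀ v ∈ C, ∀ w ∈ C, ∃ W : G.Walk v w, ∀ x ∈ W.support, x ∈ C

/-- The connected set Markov property for the bi-directed graph `G`. -/
def CSMP (G : SimpleGraph V) [DecidableRel G.Adj] (p : (V → Bool) → ℝ) : Prop :=
  ∀ C : Finset V, C.Nonempty → Conn G C → Indep p C (Finset.univ \ spo G C)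

/-- `C` is an inclusion-maximal connected subset of `D` (a connected component of the
induced subgraph on `D`). -/
def IsMaxConnComp (G : SimpleGraph V) (D C : Finset V) : Prop :=
  C ⊆ D ∧ C.Nonempty ∧ Conn G C ∧
    ∀ C' : Finset V, C ⊆ C' → C' ⊆ D → Conn G C' → C' = C

/-- The Möbius parameter `q_A(p) = P(X_A = 0)`. -/
def qM (p : (V → Bool) → ℝ) (A : Finset V) : ℝ := Pr p A (fun _ => false)

open Classical in
/-- `[B]_G`: the finset of inclusion-maximal connected subsets of `B`. -/
noncomputable def maxConnComps (G : SimpleGraph V) (B : Finset V) :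
    Finset (Finset V) :=
  B.powerset.filter (fun C => IsMaxConnComp G B C)

/-- The polynomial `p_A^W(q) = Σ_{A ⊆ B ⊆ W} (−1)^{|B∖A|} ∏_{C ∈ [B]_G} q_C`
in the variables `q`. -/
noncomputable def pPoly (G : SimpleGraph V) (A W : Finset V)
    (q : Finset V → ℝ) : ℝ :=
  ∑ B ∈ Finset.univ.filter (fun B : Finset V => A ⊆ B ∧ B ⊆ W),
    (-1 : ℝ) ^ (B \ A).card * ∏ C ∈ maxConnComps G B, q C

/-- The partial derivative of `f` with respect to the coordinate `C`. -/
noncomputable def pd (C : Finset V) (f : (Finset V → ℝ) → ℝ)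
    (q : Finset V → ℝ) : ℝ :=
  deriv (fun s : ℝ => f (Function.update q C s)) (q C)

section Aux

variable (G : SimpleGraph V) [DecidableRel G.Adj]

lemma mem_spo {w : V} {A : Finset V} : w ∈ spo G A ↔ w ∈ A ∨ ∃ v ∈ A, G.Adj v w := by
  simp [spo]

lemma subset_spo (A : Finset V) : A ⊆ spo G A := fun w hw => (mem_spo G).2 (Or.inl hw)

lemma spo_union (C C' : Finset V) : spo G (C ∪ C') = spo G C ∪ spo G C' := by
  ext w
  simp only [mem_spo, Finset.mem_union]
  aesop

lemma cross {S : Finset V} : ∀ {x y : V} (p : G.Walk x y), x ∈ S → y ∉ S →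
    ∃ a ∈ S, ∃ b, b ∉ S ∧ b ∈ p.support ∧ G.Adj a b := by
  intro x y p
  induction p with
  | nil => intro hx hy; exact absurd hx hy
  | @cons u v w h p ih =>
    intro hx hy
    by_cases hv : v ∈ S
    · obtain ⟨a, ha, b, hb, hbs, hab⟩ := ih hv hy
      exact ⟨a, ha, b, hb, by simp [hbs], hab⟩
    · exact ⟨u, hx, v, hv, by simp [p.start_mem_support], h⟩

lemma conn_insert {C : Finset V} (hc : Conn G C) {v w : V} (hv : v ∈ C) (h : G.Adj v w) :
    Conn G (insert w C) := by
  have key : ∀ b ∈ insert w C, ∃ W : G.Walk w b, ∀ x ∈ W.support, x ∈ insert w C := by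
    intro b hb
    rcases Finset.mem_insert.1 hb with rfl | hb
    · exact ⟨SimpleGraph.Walk.nil, by simp⟩
    · obtain ⟨W, hW⟩ := hc v hv b hb
      refine ⟨SimpleGraph.Walk.cons h.symm W, ?_⟩
      intro x hx
      rw [SimpleGraph.Walk.support_cons] at hx
      rcases List.mem_cons.1 hx with rfl | hx
      · exact Finset.mem_insert_self _ _
      · exact Finset.mem_insert_of_mem (hW x hx)
  intro a ha b hb
  obtain ⟨Wa, hWa⟩ := key a ha
  obtain ⟨Wb, hWb⟩ := key b hb
  refine ⟨Wa.reverse.append Wb, ?_⟩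
  intro x hx
  rcases (SimpleGraph.Walk.mem_support_append_iff _ _).1 hx with hx | hx
  · exact hWa x (by rwa [SimpleGraph.Walk.support_reverse, List.mem_reverse] at hx)
  · exact hWb x hx

lemma mem_maxConnComps {D E : Finset V} : D ∈ maxConnComps G E ↔ IsMaxConnComp G E D := by
  classical
  unfold maxConnComps
  rw [Finset.mem_filter, Finset.mem_powerset]
  exact ⟨fun h => h.2, fun h => ⟨h.1, h⟩⟩

lemma mem_maxConnComps_iff {C B : Finset V} (hC : C.Nonempty) (hc : Conn G C) :
    C ∈ maxConnComps G B ↔ C ⊆ B ∧ B ∩ spo G C ⊆ C := by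
  rw [mem_maxConnComps]
  constructor
  · rintro ⟨hCB, -, -, hmax⟩
    refine ⟨hCB, fun w hw => ?_⟩
    by_contra hwC
    obtain ⟨hwB, hws⟩ := Finset.mem_inter.1 hw
    rcases (mem_spo G).1 hws with h | ⟨v, hv, hadj⟩
    · exact hwC h
    · have := hmax (insert w C) (Finset.subset_insert _ _) (Finset.insert_subset hwB hCB)
        (conn_insert G hc hv hadj)
      exact hwC (this ▸ Finset.mem_insert_self w C)
  · rintro ⟨hCB, hclosed⟩
    refine ⟨hCB, hC, hc, fun C' hCC' hC'B hc' => ?_⟩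
    refine Finset.Subset.antisymm (fun x hx => ?_) hCC'
    by_contra hxC
    obtain ⟨v, hv⟩ := hC
    obtain ⟨W, hW⟩ := hc' v (hCC' hv) x hx
    obtain ⟨a, ha, b, hb, hbs, hab⟩ := cross G W hv hxC
    exact hb (hclosed (Finset.mem_inter.2
      ⟨hC'B (hW b hbs), (mem_spo G).2 (Or.inr ⟨a, ha, hab⟩)⟩))

lemma conn_split {C B D : Finset V} (hdisj : B ∩ spo G C = ∅) (hd : Conn G D)
    (hsub : D ⊆ C ∪ B) : D ⊆ C ∨ D ⊆ B := by
  by_contra h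
  push_neg at h
  obtain ⟨h1, h2⟩ := h
  obtain ⟨x, hxD, hxC⟩ := Finset.not_subset.1 h1
  obtain ⟨y, hyD, hyB⟩ := Finset.not_subset.1 h2
  have hxB : x ∈ B := by
    rcases Finset.mem_union.1 (hsub hxD) with h | h
    · exact absurd h hxC
    · exact h
  obtain ⟨W, hW⟩ := hd x hxD y hyD
  obtain ⟨a, ha, b, hb, hbs, hab⟩ := cross G W hxB hyB
  have hbC : b ∈ C := by
    rcases Finset.mem_union.1 (hsub (hW b hbs)) with h | h
    · exact h
    · exact absurd h hb
  have : a ∈ B ∩ spo G C :=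
    Finset.mem_inter.2 ⟨ha, (mem_spo G).2 (Or.inr ⟨b, hbC, hab.symm⟩)⟩
  rw [hdisj] at this
  exact absurd this (Finset.notMem_empty a)

lemma not_mem_maxConnComps {C B : Finset V} (hC : C.Nonempty) (hdisj : B ∩ spo G C = ∅) :
    C ∉ maxConnComps G B := by
  intro h
  have hCB : C ⊆ B := ((mem_maxConnComps G).1 h).1
  obtain ⟨v, hv⟩ := hC
  have : v ∈ B ∩ spo G C := Finset.mem_inter.2 ⟨hCB hv, subset_spo G C hv⟩
  rw [hdisj] at this
  exact absurd this (Finset.notMem_empty v)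

lemma maxConnComps_union {C B : Finset V} (hC : C.Nonempty) (hc : Conn G C)
    (hdisj : B ∩ spo G C = ∅) :
    maxConnComps G (C ∪ B) = insert C (maxConnComps G B) := by
  have hCB : ∀ {x : V}, x ∈ C → x ∈ B → False := by
    intro x h1 h2
    have : x ∈ B ∩ spo G C := Finset.mem_inter.2 ⟨h2, subset_spo G C h1⟩
    rw [hdisj] at this
    exact absurd this (Finset.notMem_empty x)
  ext D
  rw [mem_maxConnComps, Finset.mem_insert, mem_maxConnComps]
  constructor
  · rintro ⟨hD1, hD2, hD3, hD4⟩
    rcases conn_split G hdisj hD3 hD1 with h | h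
    · exact Or.inl (hD4 C h Finset.subset_union_left hc).symm
    · exact Or.inr ⟨h, hD2, hD3, fun C1 h1 h2 h3 =>
        hD4 C1 h1 (h2.trans Finset.subset_union_right) h3⟩
  · rintro (rfl | ⟨h1, h2, h3, h4⟩)
    · refine ⟨Finset.subset_union_left, hC, hc, fun C1 h1 h2 h3 => ?_⟩
      rcases conn_split G hdisj h3 h2 with h | h
      · exact Finset.Subset.antisymm h h1
      · obtain ⟨v, hv⟩ := hC
        exact absurd (h (h1 hv)) (fun hb => hCB hv hb)
    · refine ⟨h1.trans Finset.subset_union_right, h2, h3, fun C1 hc1 hc2 hc3 => ?_⟩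
      rcases conn_split G hdisj hc3 hc2 with h | h
      · obtain ⟨d, hd⟩ := h2
        exact absurd (h (hc1 hd)) (fun hcon => hCB hcon (h1 hd))
      · exact h4 C1 hc1 h hc3

lemma hasDerivAt_pPoly (A W C : Finset V) (hC : C.Nonempty) (hc : Conn G C)
    (q : Finset V → ℝ) (s₀ : ℝ) :
    HasDerivAt (fun s => pPoly G A W (Function.update q C s))
      (if C ⊆ W ∧ spo G C ∩ (A \ C) = ∅
        then (-1 : ℝ) ^ (C \ A).card * pPoly G (A \ C) (W \ spo G C) q
        else 0) s₀ := by
  classical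
  set S : Finset (Finset V) := Finset.univ.filter (fun B : Finset V => A ⊆ B ∧ B ⊆ W) with hS
  set K : ℝ := ∑ B ∈ S, (if C ∈ maxConnComps G B then
      (-1 : ℝ) ^ (B \ A).card * ∏ D ∈ (maxConnComps G B).erase C, q D else 0) with hK
  set L : ℝ := ∑ B ∈ S, (if C ∈ maxConnComps G B then 0 else
      (-1 : ℝ) ^ (B \ A).card * ∏ D ∈ maxConnComps G B, q D) with hL
  have hfun : ∀ s : ℝ, pPoly G A W (Function.update q C s) = K * s + L := by
    intro s
    rw [pPoly, hK, hL, Finset.sum_mul, ← Finset.sum_add_distrib]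
    refine Finset.sum_congr rfl fun B _ => ?_
    by_cases hCB : C ∈ maxConnComps G B
    · rw [if_pos hCB, if_pos hCB, add_zero,
        ← Finset.mul_prod_erase _ _ hCB, Function.update_self,
        Finset.prod_congr rfl fun D hD =>
          Function.update_of_ne (Finset.ne_of_mem_erase hD) s q]
      ring
    · rw [if_neg hCB, if_neg hCB, zero_mul, zero_add,
        Finset.prod_congr rfl fun D hD =>
          Function.update_of_ne (fun h : D = C => hCB (h ▸ hD)) s q]
  have hder : HasDerivAt (fun s => pPoly G A W (Function.update q C s)) K s₀ := by
    have h1 : HasDerivAt (fun s : ℝ => K * s + L) K s₀ := by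
      simpa using ((hasDerivAt_id s₀).const_mul K).add_const L
    exact h1.congr_of_eventuallyEq (Filter.Eventually.of_forall hfun)
  have hKval : K = if C ⊆ W ∧ spo G C ∩ (A \ C) = ∅
      then (-1 : ℝ) ^ (C \ A).card * pPoly G (A \ C) (W \ spo G C) q else 0 := by
    rw [hK, ← Finset.sum_filter]
    by_cases hcond : C ⊆ W ∧ spo G C ∩ (A \ C) = ∅
    · rw [if_pos hcond]
      obtain ⟨hCW, hAC⟩ := hcond
      rw [pPoly, Finset.mul_sum]
      refine Finset.sum_nbij' (fun B => B \ C) (fun B' => C ∪ B') ?_ ?_ ?_ ?_ ?_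
      · intro B hB
        rw [Finset.mem_filter] at hB
        obtain ⟨hBS, hBc⟩ := hB
        rw [hS, Finset.mem_filter] at hBS
        obtain ⟨-, hAB, hBW⟩ := hBS
        obtain ⟨hCB, hclosed⟩ := (mem_maxConnComps_iff G hC hc).1 hBc
        rw [Finset.mem_filter]
        refine ⟨Finset.mem_univ _, Finset.sdiff_subset_sdiff hAB (Finset.Subset.refl C), ?_⟩
        intro x hx
        rw [Finset.mem_sdiff] at hx ⊢
        exact ⟨hBW hx.1, fun hs => hx.2 (hclosed (Finset.mem_inter.2 ⟨hx.1, hs⟩))⟩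
      · intro B' hB'
        rw [Finset.mem_filter] at hB'
        obtain ⟨-, hAB', hB'W⟩ := hB'
        have hB'spo : ∀ {x : V}, x ∈ B' → x ∉ spo G C := by
          intro x hx
          exact (Finset.mem_sdiff.1 (hB'W hx)).2
        rw [Finset.mem_filter, hS, Finset.mem_filter]
        refine ⟨⟨Finset.mem_univ _, ?_, ?_⟩, ?_⟩
        · intro a ha
          by_cases haC : a ∈ C
          · exact Finset.mem_union_left _ haC
          · exact Finset.mem_union_right _ (hAB' (Finset.mem_sdiff.2 ⟨ha, haC⟩))
        · exact Finset.union_subset hCW (fun x hx => (Finset.mem_sdiff.1 (hB'W hx)).1)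
        · rw [mem_maxConnComps_iff G hC hc]
          refine ⟨Finset.subset_union_left, fun x hx => ?_⟩
          obtain ⟨hx1, hx2⟩ := Finset.mem_inter.1 hx
          rcases Finset.mem_union.1 hx1 with h | h
          · exact h
          · exact absurd hx2 (hB'spo h)
      · intro B hB
        rw [Finset.mem_filter] at hB
        have hCB : C ⊆ B := ((mem_maxConnComps_iff G hC hc).1 hB.2).1
        exact Finset.union_sdiff_of_subset hCB
      · intro B' hB'
        rw [Finset.mem_filter] at hB'
        obtain ⟨-, -, hB'W⟩ := hB'
        refine Finset.union_sdiff_cancel_left (Finset.disjoint_left.2 fun x hxC hxB' => ?_)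
        exact (Finset.mem_sdiff.1 (hB'W hxB')).2 (subset_spo G C hxC)
      · intro B hB
        rw [Finset.mem_filter] at hB
        obtain ⟨hBS, hBc⟩ := hB
        rw [hS, Finset.mem_filter] at hBS
        obtain ⟨-, hAB, hBW⟩ := hBS
        obtain ⟨hCB, hclosed⟩ := (mem_maxConnComps_iff G hC hc).1 hBc
        have hdisj2 : (B \ C) ∩ spo G C = ∅ := by
          rw [Finset.eq_empty_iff_forall_notMem]
          intro x hx
          obtain ⟨hx1, hx2⟩ := Finset.mem_inter.1 hx
          obtain ⟨hxB, hxC⟩ := Finset.mem_sdiff.1 hx1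
          exact hxC (hclosed (Finset.mem_inter.2 ⟨hxB, hx2⟩))
        have hcomps : maxConnComps G B = insert C (maxConnComps G (B \ C)) := by
          rw [← maxConnComps_union G hC hc hdisj2, Finset.union_sdiff_of_subset hCB]
        have hCnot : C ∉ maxConnComps G (B \ C) := not_mem_maxConnComps G hC hdisj2
        have hcard : (B \ A).card = (C \ A).card + ((B \ C) \ (A \ C)).card := by
          have hset : B \ A = (C \ A) ∪ ((B \ C) \ (A \ C)) := by
            ext x
            simp only [Finset.mem_sdiff, Finset.mem_union, not_and, not_not]
            constructor
            · rintro ⟨hxB, hxA⟩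
              by_cases hxC : x ∈ C
              · exact Or.inl ⟨hxC, hxA⟩
              · exact Or.inr ⟨⟨hxB, hxC⟩, fun h => absurd h hxA⟩
            · rintro (⟨hxC, hxA⟩ | ⟨⟨hxB, hxC⟩, hxA⟩)
              · exact ⟨hCB hxC, hxA⟩
              · refine ⟨hxB, fun hA => hxC (hxA hA)⟩
          rw [hset, Finset.card_union_of_disjoint]
          exact Finset.disjoint_left.2 fun x hx1 hx2 =>
            (Finset.mem_sdiff.1 (Finset.mem_sdiff.1 hx2).1).2 (Finset.mem_sdiff.1 hx1).1
        rw [hcomps, Finset.erase_insert hCnot, hcard, pow_add]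
        ring
    · rw [if_neg hcond]
      have hempty : S.filter (fun B => C ∈ maxConnComps G B) = ∅ := by
        rw [Finset.filter_eq_empty_iff]
        intro B hB hmem
        rw [hS, Finset.mem_filter] at hB
        obtain ⟨-, hAB, hBW⟩ := hB
        obtain ⟨hCB, hclosed⟩ := (mem_maxConnComps_iff G hC hc).1 hmem
        refine hcond ⟨hCB.trans hBW, ?_⟩
        rw [Finset.eq_empty_iff_forall_notMem]
        intro x hx
        obtain ⟨hx1, hx2⟩ := Finset.mem_inter.1 hx
        obtain ⟨hxA, hxC⟩ := Finset.mem_sdiff.1 hx2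
        exact hxC (hclosed (Finset.mem_inter.2 ⟨hAB hxA, hx1⟩))
      rw [hempty, Finset.sum_empty]
  exact hKval ▸ hder

lemma inter_spo_symm {D E : Finset V} (h : (D ∩ spo G E).Nonempty) :
    (E ∩ spo G D).Nonempty := by
  obtain ⟨x, hx⟩ := h
  obtain ⟨hxD, hxs⟩ := Finset.mem_inter.1 hx
  rcases (mem_spo G).1 hxs with h' | ⟨v, hv, hadj⟩
  · exact ⟨x, Finset.mem_inter.2 ⟨h', subset_spo G _ hxD⟩⟩
  · exact ⟨v, Finset.mem_inter.2 ⟨hv, (mem_spo G).2 (Or.inr ⟨x, hxD, hadj.symm⟩)⟩⟩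

end Aux

/-- Second derivatives of `log p_A^V` with respect to `q_C` and `q_{C̄}`, in the
three cases of the Hessian lemma. -/
theorem stmt16 (G : SimpleGraph V) [DecidableRel G.Adj] (A C C' : Finset V)
    (hC : C.Nonempty) (hc : Conn G C) (hC' : C'.Nonempty) (hc' : Conn G C')
    (q : Finset V → ℝ) (hq : 0 < pPoly G A Finset.univ q) :
    ((spo G C ∩ (A \ C)) ∪ (spo G C' ∩ (A \ C')) ≠ ∅ →
      pd C (pd C' (fun r => Real.log (pPoly G A Finset.univ r))) q = 0) ∧
    ((spo G C ∩ (A \ C)) ∪ (spo G C' ∩ (A \ C')) = ∅ → C' ∩ spo G C ≠ ∅ →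
      pd C (pd C' (fun r => Real.log (pPoly G A Finset.univ r))) q =
        -((-1 : ℝ) ^ (C \ A).card * (-1 : ℝ) ^ (C' \ A).card *
            pPoly G (A \ C) (Finset.univ \ spo G C) q *
            pPoly G (A \ C') (Finset.univ \ spo G C') q) *
          (1 / (pPoly G A Finset.univ q) ^ 2)) ∧
    ((spo G C ∩ (A \ C)) ∪ (spo G C' ∩ (A \ C')) = ∅ → C' ∩ spo G C = ∅ →
      pd C (pd C' (fun r => Real.log (pPoly G A Finset.univ r))) q =
        (-1 : ℝ) ^ ((C ∪ C') \ A).card *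
            pPoly G (A \ (C ∪ C')) (Finset.univ \ spo G (C ∪ C')) q *
            (1 / pPoly G A Finset.univ q) -
          (-1 : ℝ) ^ (C \ A).card * (-1 : ℝ) ^ (C' \ A).card *
            pPoly G (A \ C) (Finset.univ \ spo G C) q *
            pPoly G (A \ C') (Finset.univ \ spo G C') q *
            (1 / (pPoly G A Finset.univ q) ^ 2)) := by
  classical
  have hFq0 : pPoly G A Finset.univ q ≠ 0 := ne_of_gt hq
  -- inner derivative of the log
  have hlog : ∀ r : Finset V → ℝ, 0 < pPoly G A Finset.univ r →
      pd C' (fun r' => Real.log (pPoly G A Finset.univ r')) r =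
        (if spo G C' ∩ (A \ C') = ∅ then
          (-1 : ℝ) ^ (C' \ A).card * pPoly G (A \ C') (Finset.univ \ spo G C') r
         else 0) / pPoly G A Finset.univ r := by
    intro r hr
    have hd := hasDerivAt_pPoly G A Finset.univ C' hC' hc' r (r C')
    simp only [Finset.subset_univ, true_and] at hd
    have hne : pPoly G A Finset.univ (Function.update r C' (r C')) ≠ 0 := by
      rw [Function.update_eq_self]; exact ne_of_gt hr
    have hld := (hd.log hne).deriv
    rw [Function.update_eq_self] at hld
    exact hld
  have h0 : (0:ℝ) < pPoly G A Finset.univ (Function.update q C (q C)) := by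
    rw [Function.update_eq_self]; exact hq
  have hden : HasDerivAt (fun s => pPoly G A Finset.univ (Function.update q C s))
      (if spo G C ∩ (A \ C) = ∅ then
        (-1 : ℝ) ^ (C \ A).card * pPoly G (A \ C) (Finset.univ \ spo G C) q
       else 0) (q C) := by
    have hd := hasDerivAt_pPoly G A Finset.univ C hC hc q (q C)
    simpa only [Finset.subset_univ, true_and] using hd
  have hev : ∀ᶠ s in nhds (q C), 0 < pPoly G A Finset.univ (Function.update q C s) :=
    hden.continuousAt.eventually (eventually_gt_nhds h0)
  have hnum := hasDerivAt_pPoly G (A \ C') (Finset.univ \ spo G C') C hC hc q (q C)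
  refine ⟨?_, ?_, ?_⟩
  · -- case (i)
    intro H
    by_cases hA' : spo G C' ∩ (A \ C') = ∅
    · -- then spo C ∩ (A \ C) ≠ ∅
      have hA : spo G C ∩ (A \ C) ≠ ∅ := by
        intro h; exact H (by rw [h, hA', Finset.union_empty])
      have heq : (fun s => pd C' (fun r => Real.log (pPoly G A Finset.univ r))
            (Function.update q C s)) =ᶠ[nhds (q C)]
          (fun s => ((-1 : ℝ) ^ (C' \ A).card *
              pPoly G (A \ C') (Finset.univ \ spo G C') (Function.update q C s)) /
            pPoly G A Finset.univ (Function.update q C s)) :=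
        hev.mono fun s hs => (hlog _ hs).trans (by rw [if_pos hA'])
      have hGd0 : ¬ (C ⊆ Finset.univ \ spo G C' ∧ spo G C ∩ ((A \ C') \ C) = ∅) := by
        rintro ⟨hsub, h2⟩
        apply hA
        rw [Finset.eq_empty_iff_forall_notMem]
        intro x hx
        obtain ⟨hxs, hxac⟩ := Finset.mem_inter.1 hx
        obtain ⟨hxA, hxC⟩ := Finset.mem_sdiff.1 hxac
        have hxC' : x ∉ C' := by
          intro hxC'
          rcases (mem_spo G).1 hxs with h' | ⟨v, hv, hadj⟩
          · exact hxC h'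
          · have : v ∈ spo G C' := (mem_spo G).2 (Or.inr ⟨x, hxC', hadj.symm⟩)
            exact (Finset.mem_sdiff.1 (hsub hv)).2 this
        have : x ∈ spo G C ∩ ((A \ C') \ C) := Finset.mem_inter.2
          ⟨hxs, Finset.mem_sdiff.2 ⟨Finset.mem_sdiff.2 ⟨hxA, hxC'⟩, hxC⟩⟩
        rw [h2] at this
        exact absurd this (Finset.notMem_empty x)
      rw [if_neg hGd0] at hnum
      have hnum' := hnum.const_mul ((-1 : ℝ) ^ (C' \ A).card)
      rw [if_neg hA] at hden
      have hdiv := hnum'.div hden (ne_of_gt h0)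
      have hres := (heq.deriv_eq).trans hdiv.deriv
      rw [Function.update_eq_self] at hres
      refine hres.trans ?_
      ring
    · -- inner derivative vanishes identically near q
      have heq : (fun s => pd C' (fun r => Real.log (pPoly G A Finset.univ r))
            (Function.update q C s)) =ᶠ[nhds (q C)] (fun _ => (0:ℝ)) :=
        hev.mono fun s hs => (hlog _ hs).trans (by rw [if_neg hA', zero_div])
      exact heq.deriv_eq.trans (deriv_const _ _)
  · -- case (ii)
    intro H1 H2
    obtain ⟨hA, hA'⟩ : spo G C ∩ (A \ C) = ∅ ∧ spo G C' ∩ (A \ C') = ∅ :=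
      Finset.union_eq_empty.1 H1
    have heq : (fun s => pd C' (fun r => Real.log (pPoly G A Finset.univ r))
          (Function.update q C s)) =ᶠ[nhds (q C)]
        (fun s => ((-1 : ℝ) ^ (C' \ A).card *
            pPoly G (A \ C') (Finset.univ \ spo G C') (Function.update q C s)) /
          pPoly G A Finset.univ (Function.update q C s)) :=
      hev.mono fun s hs => (hlog _ hs).trans (by rw [if_pos hA'])
    have hGd0 : ¬ (C ⊆ Finset.univ \ spo G C' ∧ spo G C ∩ ((A \ C') \ C) = ∅) := by
      rintro ⟨hsub, -⟩
      obtain ⟨x, hx⟩ := inter_spo_symm G (Finset.nonempty_iff_ne_empty.2 H2)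
      obtain ⟨hx1, hx2⟩ := Finset.mem_inter.1 hx
      exact (Finset.mem_sdiff.1 (hsub hx1)).2 hx2
    rw [if_neg hGd0] at hnum
    have hnum' := hnum.const_mul ((-1 : ℝ) ^ (C' \ A).card)
    rw [if_pos hA] at hden
    have hdiv := hnum'.div hden (ne_of_gt h0)
    have hres := (heq.deriv_eq).trans hdiv.deriv
    rw [Function.update_eq_self] at hres
    refine hres.trans ?_
    field_simp
    ring
  · -- case (iii)
    intro H1 H2
    obtain ⟨hA, hA'⟩ : spo G C ∩ (A \ C) = ∅ ∧ spo G C' ∩ (A \ C') = ∅ :=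
      Finset.union_eq_empty.1 H1
    have hCC' : ∀ {x : V}, x ∈ C → x ∉ spo G C' := by
      intro x hx hxs
      have hne : (C' ∩ spo G C).Nonempty :=
        inter_spo_symm G ⟨x, Finset.mem_inter.2 ⟨hx, hxs⟩⟩
      rw [H2] at hne
      exact Finset.not_nonempty_empty hne
    have hdisjCC' : ∀ {x : V}, x ∈ C → x ∉ C' := fun hx hxC' =>
      hCC' hx (subset_spo G C' hxC')
    have heq : (fun s => pd C' (fun r => Real.log (pPoly G A Finset.univ r))
          (Function.update q C s)) =ᶠ[nhds (q C)]
        (fun s => ((-1 : ℝ) ^ (C' \ A).card *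
            pPoly G (A \ C') (Finset.univ \ spo G C') (Function.update q C s)) /
          pPoly G A Finset.univ (Function.update q C s)) :=
      hev.mono fun s hs => (hlog _ hs).trans (by rw [if_pos hA'])
    have hGd1 : C ⊆ Finset.univ \ spo G C' ∧ spo G C ∩ ((A \ C') \ C) = ∅ := by
      constructor
      · intro x hx
        exact Finset.mem_sdiff.2 ⟨Finset.mem_univ _, hCC' hx⟩
      · rw [Finset.eq_empty_iff_forall_notMem]
        intro x hx
        obtain ⟨hx1, hx2⟩ := Finset.mem_inter.1 hx
        obtain ⟨hx3, hx4⟩ := Finset.mem_sdiff.1 hx2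
        obtain ⟨hx5, -⟩ := Finset.mem_sdiff.1 hx3
        have : x ∈ spo G C ∩ (A \ C) :=
          Finset.mem_inter.2 ⟨hx1, Finset.mem_sdiff.2 ⟨hx5, hx4⟩⟩
        rw [hA] at this
        exact absurd this (Finset.notMem_empty x)
    rw [if_pos hGd1] at hnum
    have hsetA : (A \ C') \ C = A \ (C ∪ C') := by
      ext x
      simp only [Finset.mem_sdiff, Finset.mem_union]
      tauto
    have hsetW : (Finset.univ \ spo G C') \ spo G C = Finset.univ \ spo G (C ∪ C') := by
      rw [spo_union]
      ext x
      simp only [Finset.mem_sdiff, Finset.mem_union]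
      tauto
    have hsetC : C \ (A \ C') = C \ A := by
      ext x
      simp only [Finset.mem_sdiff]
      constructor
      · rintro ⟨hx1, hx2⟩
        refine ⟨hx1, fun hA2 => hx2 ⟨hA2, hdisjCC' hx1⟩⟩
      · rintro ⟨hx1, hx2⟩
        exact ⟨hx1, fun h => hx2 h.1⟩
    have hcardU : ((C ∪ C') \ A).card = (C \ A).card + (C' \ A).card := by
      rw [Finset.union_sdiff_distrib, Finset.card_union_of_disjoint]
      exact Finset.disjoint_left.2 fun x hx1 hx2 =>
        hdisjCC' (Finset.mem_sdiff.1 hx1).1 (Finset.mem_sdiff.1 hx2).1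
    rw [hsetA, hsetW, hsetC] at hnum
    have hnum' := hnum.const_mul ((-1 : ℝ) ^ (C' \ A).card)
    rw [if_pos hA] at hden
    have hdiv := hnum'.div hden (ne_of_gt h0)
    have hres := (heq.deriv_eq).trans hdiv.deriv
    rw [Function.update_eq_self] at hres
    rw [hcardU, pow_add]
    refine hres.trans ?_
    field_simp

end BMMI
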